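/- For infinite cardinals κ ≤ λ, the cardinal λ^κ equals 2^κ + cf([λ]^κ, ⊆), where cf([λ]^κ, ⊆) is the cofinality of the partial order of subsets of λ of cardinality at most κ ordered by inclusion. -/
import Mathlib


open Cardinal

/-- The cofinality of the partial order `([A]^{≤κ}, ⊆)` of subsets of `α` of
cardinality at most `κ`, ordered by inclusion: the least cardinality of a family `Q`
of such subsets such that every such subset is contained in a member of `Q`. -/
noncomputable def subsetsCof (α : Type*) (κ : Cardinal) : Cardinal :=
  sInf { c | ∃ Q : Set (Set α), (∀ s ∈ Q, #s ≤ κ) ∧ #Q = c ∧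
      ∀ s : Set α, #s ≤ κ → ∃ t ∈ Q, s ⊆ t }

theorem stmt_6 (κ l : Cardinal) (hκ : aleph0 ≤ κ) (hκl : κ ≤ l) :
    l ^ κ = 2 ^ κ + subsetsCof l.out κ := by
  have hl : aleph0 ≤ l := hκ.trans hκl
  have hmkα : #l.out = l := mk_out l
  have hmkι : #κ.out = κ := mk_out κ
  have hιne : Nonempty κ.out := by
    rw [← mk_ne_zero_iff, hmkι]
    exact (aleph0_pos.trans_le hκ).ne'
  have hαne : Nonempty l.out := by
    rw [← mk_ne_zero_iff, hmkα]
    exact (aleph0_pos.trans_le hl).ne'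
  have harrow : #(κ.out → l.out) = l ^ κ := by
    rw [← power_def, hmkα, hmkι]
  have h2κinf : aleph0 ≤ 2 ^ κ := hκ.trans (cantor κ).le
  have hlκinf : aleph0 ≤ l ^ κ := by
    refine h2κinf.trans (power_le_power_right ?_)
    exact_mod_cast (nat_lt_aleph0 2).le.trans hl
  -- the canonical cofinal family: all ranges of functions `κ.out → l.out`
  set Q₀ : Set (Set l.out) := Set.range (fun f : κ.out → l.out => Set.range f) with hQ₀
  have hQ₀card : ∀ s ∈ Q₀, #s ≤ κ := by
    rintro s ⟨f, rfl⟩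
    exact mk_range_le.trans hmkι.le
  have hQ₀cof : ∀ s : Set l.out, #s ≤ κ → ∃ t ∈ Q₀, s ⊆ t := by
    intro s hs
    rcases s.eq_empty_or_nonempty with rfl | hne
    · exact ⟨Set.range (fun _ : κ.out => Classical.arbitrary l.out), ⟨_, rfl⟩, by simp⟩
    · haveI : Nonempty s := hne.to_subtype
      rw [← hmkι] at hs
      obtain ⟨g⟩ := Cardinal.le_def _ _ |>.mp hs
      refine ⟨Set.range (fun i => ((Function.invFun g i : s) : l.out)), ⟨_, rfl⟩, ?_⟩
      intro x hx
      obtain ⟨i, hi⟩ := Function.invFun_surjective g.injective ⟨x, hx⟩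
      exact ⟨i, congrArg Subtype.val hi⟩
  have hmem : #Q₀ ∈ { c | ∃ Q : Set (Set l.out), (∀ s ∈ Q, #s ≤ κ) ∧ #Q = c ∧
      ∀ s : Set l.out, #s ≤ κ → ∃ t ∈ Q, s ⊆ t } := ⟨Q₀, hQ₀card, rfl, hQ₀cof⟩
  have hcof_le : subsetsCof l.out κ ≤ l ^ κ := by
    refine (csInf_le' hmem).trans ?_
    rw [← harrow]
    exact mk_range_le
  apply le_antisymm
  · -- upper bound: use a minimal cofinal family
    have hcm : subsetsCof l.out κ ∈ { c | ∃ Q : Set (Set l.out), (∀ s ∈ Q, #s ≤ κ) ∧ #Q = c ∧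
        ∀ s : Set l.out, #s ≤ κ → ∃ t ∈ Q, s ⊆ t } := csInf_mem ⟨#Q₀, hmem⟩
    obtain ⟨Q, hQc, hQeq, hQcof⟩ := hcm
    have key : ∀ f : κ.out → l.out, ∃ t ∈ Q, Set.range f ⊆ t := fun f =>
      hQcof _ (mk_range_le.trans hmkι.le)
    choose T hTQ hTsub using key
    set Φ : (κ.out → l.out) → (t : Q) × (κ.out → (t : Set l.out)) := fun f =>
      ⟨⟨T f, hTQ f⟩, fun i => ⟨f i, hTsub f (Set.mem_range_self i)⟩⟩ with hΦ
    have hΦinj : Function.Injective Φ := by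
      intro f g h
      funext i
      have : ((Φ f).2 i : l.out) = ((Φ g).2 i : l.out) := by rw [h]
      exact this
    have h1 : l ^ κ ≤ #((t : Q) × (κ.out → (t : Set l.out))) := by
      rw [← harrow]; exact mk_le_of_injective hΦinj
    have h2 : #((t : Q) × (κ.out → (t : Set l.out))) ≤ #Q * 2 ^ κ := by
      rw [mk_sigma]
      refine (sum_le_sum _ (fun _ => 2 ^ κ) ?_).trans_eq (sum_const' _ _)
      intro t
      have : #(κ.out → (t : Set l.out)) = #(t : Set l.out) ^ κ := by
        rw [← power_def, hmkι]
      rw [this, ← power_self_eq hκ]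
      exact power_le_power_right (hQc t t.2)
    have h3 : #Q * 2 ^ κ ≤ 2 ^ κ + subsetsCof l.out κ := by
      rw [hQeq]
      refine (mul_le_max _ _).trans ?_
      refine max_le (max_le ?_ ?_) ?_
      · exact self_le_add_left _ _
      · exact le_self_add
      · exact h2κinf.trans le_self_add
    exact h1.trans (h2.trans h3)
  · -- lower bound
    have h2κ : 2 ^ κ ≤ l ^ κ := by
      refine power_le_power_right ?_
      exact_mod_cast (nat_lt_aleph0 2).le.trans hl
    calc 2 ^ κ + subsetsCof l.out κ ≤ l ^ κ + l ^ κ := add_le_add h2κ hcof_le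
      _ = l ^ κ := add_eq_self hlκinf
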